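/- arXiv:2211.14696 — 2 statements merged into one kernel-verified Lean document; each statement's English description precedes it below -/
import Mathlib

section
/- For every n ≥ 1, the diagonal functor from the walking reflexive pair category D₀ to the product category D₀ⁿ is a final functor. -/
open CategoryTheory CategoryTheory.Limits
open CategoryTheory.Limits.WalkingReflexivePair

namespace StmtAux

abbrev D := WalkingReflexivePair

/-- canonical map to `zero` -/
def toZero : ∀ a : D, a ⟶ zero
  | .zero => 𝟙 _
  | .one => Hom.left

/-- is this map `right`? -/
def isR : ∀ {a : D}, Hom a zero → Bool
  | _, .right => true
  | _, _ => false

/-- lift of a map to `zero` along maps to `one`; the boolean marks a coordinate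
where `right` is lifted to the identity. -/
def lift : ∀ {a : D}, Hom a zero → Bool → Hom a one
  | _, .left, _ => .leftCompReflexion
  | _, .right, true => .id .one
  | _, .right, false => .rightCompReflexion
  | _, .id _, _ => .reflexion

/-- replace `right` by `left` -/
def setL : ∀ {a : D}, Hom a zero → Hom a zero
  | _, .right => .left
  | _, f => f

lemma lift_right : ∀ {a : D} (f : Hom a zero) (b : Bool),
    (lift f b ≫ (Hom.right : one ⟶ zero) : a ⟶ zero) = f := by
  intro a f b
  cases f <;> cases b <;> rfl

lemma lift_left_false : ∀ {a : D} (f : Hom a zero),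
    (lift f false ≫ (Hom.left : one ⟶ zero) : a ⟶ zero) = f := by
  intro a f; cases f <;> rfl

lemma lift_left_true : ∀ {a : D} (f : Hom a zero),
    (lift f true ≫ (Hom.left : one ⟶ zero) : a ⟶ zero) = setL f := by
  intro a f; cases f <;> rfl

lemma isR_setL : ∀ {a : D} (f : Hom a zero), isR (setL f) = false := by
  intro a f; cases f <;> rfl

lemma eq_toZero_of_not_isR : ∀ {a : D} (f : Hom a zero), isR f = false → f = toZero a := by
  intro a f h
  cases f <;> first | rfl | simp [isR] at h

end StmtAux

open StmtAux

/-- For every `n ≥ 1`, the diagonal functor from the walking reflexive pair category `D₀`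
to the product category `D₀ⁿ` is a final functor. -/
theorem stmt_7 (n : ℕ) (hn : 1 ≤ n) :
    (Functor.pi' (fun _ : Fin n => 𝟭 WalkingReflexivePair)).Final := by
  set F := Functor.pi' (fun _ : Fin n => 𝟭 WalkingReflexivePair) with hF
  constructor
  intro X
  refine IsConnected.of_induct
    (j₀ := StructuredArrow.mk (Y := zero) (fun i => toZero (X i))) ?_
  intro p hp0 hstep
  -- key: all objects with target `zero` are in `p`, by induction on the number of `right`s
  have key : ∀ (m : ℕ) (h : X ⟶ F.obj zero),
      (Finset.univ.filter fun i => isR (h i) = true).card = m →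
      StructuredArrow.mk (Y := zero) (T := F) h ∈ p := by
    intro m
    induction m using Nat.strong_induction_on with
    | _ m IH =>
      intro h hcard
      rcases Nat.eq_zero_or_pos m with hm | hm
      · -- no `right`s : morphism from the base point
        subst hm
        have hempty : ∀ i, isR (h i) = false := by
          intro i
          by_contra hi
          have : i ∈ (Finset.univ.filter fun i => isR (h i) = true) := by
            simp only [Finset.mem_filter, Finset.mem_univ, true_and]
            simpa using hi
          rw [Finset.card_eq_zero] at hcard
          simp [hcard] at this
        have mor : StructuredArrow.mk (Y := zero) (T := F)
            (fun i => toZero (X i)) ⟶ StructuredArrow.mk (Y := zero) (T := F) h :=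
          StructuredArrow.homMk (𝟙 zero) (by
            funext i
            have := eq_toZero_of_not_isR (h i) (hempty i)
            simp [hF, this]
            exact Category.comp_id (toZero (X i)))
        exact (hstep mor).mp hp0
      · -- pick a coordinate with a `right`, and flip it to `left`
        have : (Finset.univ.filter fun i => isR (h i) = true).Nonempty := by
          rw [← Finset.card_pos, hcard]; exact hm
        obtain ⟨i, hi⟩ := this
        have hiR : isR (h i) = true := by
          simpa using (Finset.mem_filter.mp hi).2
        set g : X ⟶ F.obj one := fun j => lift (h j) (decide (j = i)) with hg
        set h' : X ⟶ F.obj zero := fun j => g j ≫ Hom.left with hh'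
        have mor1 : StructuredArrow.mk (Y := one) (T := F) g ⟶
            StructuredArrow.mk (Y := zero) (T := F) h :=
          StructuredArrow.homMk (Hom.right : one ⟶ zero) (by
            funext j
            exact lift_right (h j) _)
        have mor2 : StructuredArrow.mk (Y := one) (T := F) g ⟶
            StructuredArrow.mk (Y := zero) (T := F) h' :=
          StructuredArrow.homMk (Hom.left : one ⟶ zero) rfl
        have hfilter : (Finset.univ.filter fun j => isR (h' j) = true) =
            (Finset.univ.filter fun j => isR (h j) = true).erase i := by
          ext j
          simp only [Finset.mem_filter, Finset.mem_univ, true_and, Finset.mem_erase]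
          by_cases hji : j = i
          · subst hji
            simp [hh', hg, lift_left_true, isR_setL]
            exact (congrArg isR (lift_left_true (h j))).trans (isR_setL _)
          · simp [hh', hg, hji, lift_left_false]
            exact congrArg isR (lift_left_false (h j))
        have hcard' : (Finset.univ.filter fun j => isR (h' j) = true).card = m - 1 := by
          rw [hfilter, Finset.card_erase_of_mem hi, hcard]
        have hp' := IH (m - 1) (by omega) h' hcard'
        exact (hstep mor1).mp ((hstep mor2).mpr hp')
  intro j
  rw [StructuredArrow.eq_mk j]
  obtain ⟨⟨⟩, c, f⟩ := j
  cases c with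
  | zero => exact key _ f rfl
  | one =>
    have mor : StructuredArrow.mk (Y := one) (T := F) f ⟶
        StructuredArrow.mk (Y := zero) (T := F) (fun j => f j ≫ Hom.left : X ⟶ F.obj zero) :=
      StructuredArrow.homMk (Hom.left : one ⟶ zero) rfl
    exact (hstep mor).mpr (key _ _ rfl)
end

section
/- If a multivariable functor F : Cⁿ → C preserves reflexive coequalizers in each variable separately (with the other variables fixed), then F preserves reflexive coequalizers of n-tuples: for reflexive pairs X_i ⇉ Y_i (1 ≤ i ≤ n), the canonical morphism from the coequalizer of F(X₁,…,Xₙ) ⇉ F(Y₁,…,Yₙ) to F(Ceq(X₁⇉Y₁), …, Ceq(Xₙ⇉Yₙ)) is an isomorphism. -/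
open CategoryTheory CategoryTheory.Limits

/-- `q : Y ⟶ Q` is a coequalizer of `f, g : X ⟶ Y`, expressed elementarily. -/
def IsCoeq {C : Type u} [Category.{v} C] {X Y Q : C} (f g : X ⟶ Y) (q : Y ⟶ Q) : Prop :=
  f ≫ q = g ≫ q ∧ ∀ (Z : C) (k : Y ⟶ Z), f ≫ k = g ≫ k → ∃! d : Q ⟶ Z, q ≫ d = k

/-- The morphism of the product category `Cⁿ` which is `φ` in the `i`-th component and the
identity (of `A j`) in all other components. -/
def updHom {C : Type u} [Category.{v} C] {n : ℕ} (A : Fin n → C) (i : Fin n)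
    {X Y : C} (φ : X ⟶ Y) : Function.update A i X ⟶ Function.update A i Y :=
  fun j =>
    if h : j = i then
      eqToHom (by rw [h, Function.update_self]) ≫ φ ≫ eqToHom (by rw [h, Function.update_self])
    else
      eqToHom (by rw [Function.update_of_ne h, Function.update_of_ne h])

section Aux

variable {C : Type u} [Category.{v} C]

theorem IsCoeq.cancel {X Y Q : C} {f g : X ⟶ Y} {q : Y ⟶ Q} (h : IsCoeq f g q)
    {Z : C} {u v : Q ⟶ Z} (huv : q ≫ u = q ≫ v) : u = v := by
  obtain ⟨d, _, hud⟩ := h.2 Z (q ≫ v) (by rw [← Category.assoc, h.1, Category.assoc])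
  exact (hud u huv).trans (hud v rfl).symm

theorem IsCoeq.epi {X Y Q : C} {f g : X ⟶ Y} {q : Y ⟶ Q} (h : IsCoeq f g q) : Epi q :=
  ⟨fun u v huv => h.cancel huv⟩

theorem isCoeq_self {X Y Q : C} (f : X ⟶ Y) (q : Y ⟶ Q) [IsIso q] : IsCoeq f f q :=
  ⟨rfl, fun Z k _ => ⟨inv q ≫ k, by simp, fun d hd => by rw [← hd]; simp⟩⟩

theorem IsCoeq.transport' {X Y Q X' Y' Q' : C} {f g : X ⟶ Y} {q : Y ⟶ Q}
    {f' g' : X' ⟶ Y'} {q' : Y' ⟶ Q'}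
    (eX : X' = X) (eY : Y' = Y) (eQ : Q' = Q)
    (hf : f' = eqToHom eX ≫ f ≫ eqToHom eY.symm)
    (hg : g' = eqToHom eX ≫ g ≫ eqToHom eY.symm)
    (hq : q' = eqToHom eY ≫ q ≫ eqToHom eQ.symm)
    (h : IsCoeq f' g' q') : IsCoeq f g q := by
  subst eX; subst eY; subst eQ
  rw [hf, hg, hq] at h
  simpa using h

variable {n : ℕ}

/-- Mixed object: `A j` on `S`, `B j` off `S`. -/
def mixObj (S : Finset (Fin n)) (A B : Fin n → C) : Fin n → C :=
  fun j => if j ∈ S then A j else B j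

theorem mixObj_mem {S : Finset (Fin n)} {A B : Fin n → C} {j : Fin n} (h : j ∈ S) :
    mixObj S A B j = A j := if_pos h

theorem mixObj_not_mem {S : Finset (Fin n)} {A B : Fin n → C} {j : Fin n} (h : j ∉ S) :
    mixObj S A B j = B j := if_neg h

/-- Mixed morphism: identity on `S`, `ψ j` off `S`. -/
def mixHom (S : Finset (Fin n)) {A B B' : Fin n → C} (ψ : ∀ j, B j ⟶ B' j) :
    mixObj S A B ⟶ mixObj S A B' :=
  fun j =>
    if h : j ∈ S then
      eqToHom ((mixObj_mem h).trans (mixObj_mem h).symm)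
    else
      eqToHom (mixObj_not_mem h) ≫ ψ j ≫ eqToHom (mixObj_not_mem h).symm

theorem mainCoeq (F : (Fin n → C) ⥤ C)
    (Hsep : ∀ (i : Fin n) (A : Fin n → C) (X Y : C) (f g : X ⟶ Y) (s : Y ⟶ X),
      s ≫ f = 𝟙 Y → s ≫ g = 𝟙 Y →
      ∀ (Q : C) (q : Y ⟶ Q), IsCoeq f g q →
        IsCoeq (F.map (updHom A i f)) (F.map (updHom A i g)) (F.map (updHom A i q)))
    (X Y Q : Fin n → C) (f g : ∀ i, X i ⟶ Y i) (s : ∀ i, Y i ⟶ X i)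
    (hf : ∀ i, s i ≫ f i = 𝟙 (Y i)) (hg : ∀ i, s i ≫ g i = 𝟙 (Y i))
    (q : ∀ i, Y i ⟶ Q i) (hq : ∀ i, IsCoeq (f i) (g i) (q i)) :
    ∀ (m : ℕ) (S : Finset (Fin n)), Sᶜ.card = m →
      IsCoeq (F.map (mixHom (A := Q) S f)) (F.map (mixHom (A := Q) S g))
        (F.map (mixHom (A := Q) S q)) := by
  have hf' : ∀ (j : Fin n) {W : C} (φ : Y j ⟶ W), s j ≫ f j ≫ φ = φ := fun j W φ => by
    rw [← Category.assoc, hf j, Category.id_comp]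
  have hg' : ∀ (j : Fin n) {W : C} (φ : Y j ⟶ W), s j ≫ g j ≫ φ = φ := fun j W φ => by
    rw [← Category.assoc, hg j, Category.id_comp]
  have hq' : ∀ (j : Fin n) {W : C} (φ : Q j ⟶ W), f j ≫ q j ≫ φ = g j ≫ q j ≫ φ := fun j W φ => by
    rw [← Category.assoc, ← Category.assoc, (hq j).1]
  have mec : ∀ {A B : Fin n → C} (h : A = B) (h' : B = A) {Z : C} (t : F.obj A ⟶ Z),
      F.map (eqToHom h) ≫ F.map (eqToHom h') ≫ t = t := by
    intro A B h h' Z t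
    rw [← Category.assoc, ← F.map_comp, eqToHom_trans, eqToHom_refl, F.map_id, Category.id_comp]
  intro m
  induction m with
  | zero =>
    intro S hS
    have hSu : S = Finset.univ := by
      rwa [Finset.card_eq_zero, Finset.compl_eq_empty_iff] at hS
    subst hSu
    have hfg : mixHom (A := Q) (Finset.univ : Finset (Fin n)) f
        = mixHom (A := Q) Finset.univ g := by
      funext j; simp [mixHom]
    have eqU : mixObj (Finset.univ : Finset (Fin n)) Q Y = mixObj Finset.univ Q Q := by
      funext j; simp [mixObj]
    have hqe : mixHom (A := Q) (Finset.univ : Finset (Fin n)) q = eqToHom eqU := by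
      funext j; simp [mixHom, Functor.eqToHom_proj]
    rw [hfg, hqe]
    exact isCoeq_self _ _
  | succ m ih =>
    intro S hS
    obtain ⟨i, hi⟩ : Sᶜ.Nonempty := Finset.card_pos.mp (by omega)
    have hiS : i ∉ S := Finset.mem_compl.mp hi
    have hiT : i ∈ insert i S := Finset.mem_insert_self i S
    have hTc : (insert i S)ᶜ.card = m := by
      rw [Finset.compl_insert, Finset.card_erase_of_mem hi, hS]; omega
    have IH := ih (insert i S) hTc
    have hc1 := Hsep i (mixObj S Q Y) _ _ (f i) (g i) (s i) (hf i) (hg i) _ (q i) (hq i)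
    have hc3 := Hsep i (mixObj (insert i S) Q X) _ _ (f i) (g i) (s i) (hf i) (hg i) _ (q i) (hq i)
    -- object equalities
    have eqYY : Function.update (mixObj S Q Y) i (Y i) = mixObj S Q Y := by
      funext j
      rcases eq_or_ne j i with rfl | hji
      · rw [Function.update_self]; exact (mixObj_not_mem hiS).symm
      · rw [Function.update_of_ne hji]
    have eqYQ : Function.update (mixObj S Q Y) i (Q i) = mixObj (insert i S) Q Y := by
      funext j
      rcases eq_or_ne j i with rfl | hji
      · rw [Function.update_self]; exact (mixObj_mem hiT).symm
      · rw [Function.update_of_ne hji]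
        by_cases hjS : j ∈ S
        · rw [mixObj_mem hjS, mixObj_mem (Finset.mem_insert_of_mem hjS)]
        · rw [mixObj_not_mem hjS,
            mixObj_not_mem (show j ∉ insert i S by simp [Finset.mem_insert, hji, hjS])]
    have eqXQ : Function.update (mixObj (insert i S) Q X) i (Q i) = mixObj (insert i S) Q X := by
      funext j
      rcases eq_or_ne j i with rfl | hji
      · rw [Function.update_self]; exact (mixObj_mem hiT).symm
      · rw [Function.update_of_ne hji]
    have eqQQ : mixObj (insert i S) Q Q = mixObj S Q Q := by
      funext j; simp [mixObj]
    -- the factorization of q_S through the one-variable coequalizer and q_T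
    have hqfact : mixHom (A := Q) S q
        = (eqToHom eqYY.symm ≫ updHom (mixObj S Q Y) i (q i) ≫ eqToHom eqYQ)
            ≫ mixHom (A := Q) (insert i S) q ≫ eqToHom eqQQ := by
      funext j
      rcases eq_or_ne j i with rfl | hji
      · simp [mixHom, updHom, Pi.comp_apply, Functor.eqToHom_proj, hiS, hiT]
      · by_cases hjS : j ∈ S <;>
          simp [mixHom, updHom, Pi.comp_apply, Functor.eqToHom_proj, hji, hjS, Finset.mem_insert]
    constructor
    · rw [← F.map_comp, ← F.map_comp]
      congr 1
      funext j
      by_cases hjS : j ∈ S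
      · simp [mixHom, Pi.comp_apply, hjS]
      · simp [mixHom, Pi.comp_apply, hjS, hq']
    · intro Z k hk
      -- Step 1: k coequalizes the i-th variable pair
      obtain ⟨v, hvf, hvg⟩ :
          ∃ v : Function.update (mixObj S Q Y) i (X i) ⟶ mixObj S Q X,
            v ≫ mixHom (A := Q) S f = updHom (mixObj S Q Y) i (f i) ≫ eqToHom eqYY ∧
            v ≫ mixHom (A := Q) S g = updHom (mixObj S Q Y) i (g i) ≫ eqToHom eqYY := by
        refine ⟨fun j =>
          if hji : j = i then
            eqToHom (by subst hji; rw [Function.update_self]; exact (mixObj_not_mem hiS).symm)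
          else if hjS : j ∈ S then
            eqToHom (by rw [Function.update_of_ne hji, mixObj_mem hjS, mixObj_mem hjS])
          else
            eqToHom (by rw [Function.update_of_ne hji, mixObj_not_mem hjS])
              ≫ s j ≫ eqToHom (mixObj_not_mem hjS).symm, ?_, ?_⟩ <;>
        · funext j
          rcases eq_or_ne j i with rfl | hji
          · simp [mixHom, updHom, Pi.comp_apply, Functor.eqToHom_proj, hiS]
          · by_cases hjS : j ∈ S <;>
              simp [mixHom, updHom, Pi.comp_apply, Functor.eqToHom_proj, hji, hjS, hf', hg']
      have claim1 : F.map (updHom (mixObj S Q Y) i (f i)) ≫ (F.map (eqToHom eqYY) ≫ k)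
          = F.map (updHom (mixObj S Q Y) i (g i)) ≫ (F.map (eqToHom eqYY) ≫ k) := by
        have t1 := congrArg F.map hvf
        have t2 := congrArg F.map hvg
        simp only [F.map_comp] at t1 t2
        calc F.map (updHom (mixObj S Q Y) i (f i)) ≫ (F.map (eqToHom eqYY) ≫ k)
            = (F.map (updHom (mixObj S Q Y) i (f i)) ≫ F.map (eqToHom eqYY)) ≫ k := by
              rw [Category.assoc]
          _ = (F.map v ≫ F.map (mixHom (A := Q) S f)) ≫ k := by rw [t1]
          _ = F.map v ≫ F.map (mixHom (A := Q) S f) ≫ k := by rw [Category.assoc]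
          _ = F.map v ≫ F.map (mixHom (A := Q) S g) ≫ k := by rw [hk]
          _ = (F.map v ≫ F.map (mixHom (A := Q) S g)) ≫ k := by rw [Category.assoc]
          _ = (F.map (updHom (mixObj S Q Y) i (g i)) ≫ F.map (eqToHom eqYY)) ≫ k := by rw [t2]
          _ = F.map (updHom (mixObj S Q Y) i (g i)) ≫ (F.map (eqToHom eqYY) ≫ k) := by
              rw [Category.assoc]
      obtain ⟨k₁', hk₁', -⟩ := hc1.2 Z (F.map (eqToHom eqYY) ≫ k) claim1
      set k₁ : F.obj (mixObj (insert i S) Q Y) ⟶ Z := F.map (eqToHom eqYQ.symm) ≫ k₁'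
        with hk₁def
      have hk₁ : F.map (eqToHom eqYY.symm) ≫ F.map (updHom (mixObj S Q Y) i (q i))
          ≫ F.map (eqToHom eqYQ) ≫ k₁ = k := by
        rw [hk₁def, mec eqYQ eqYQ.symm k₁', hk₁', mec eqYY.symm eqYY k]
      -- Step 2: k₁ coequalizes the pair at level T = insert i S
      obtain ⟨c, hcf, hcg⟩ :
          ∃ c : Function.update (mixObj (insert i S) Q X) i (Y i) ⟶ mixObj S Q X,
            (updHom (mixObj (insert i S) Q X) i (q i) ≫ eqToHom eqXQ
                ≫ mixHom (A := Q) (insert i S) f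
              = c ≫ mixHom (A := Q) S f ≫ eqToHom eqYY.symm
                ≫ updHom (mixObj S Q Y) i (q i) ≫ eqToHom eqYQ) ∧
            (updHom (mixObj (insert i S) Q X) i (q i) ≫ eqToHom eqXQ
                ≫ mixHom (A := Q) (insert i S) g
              = c ≫ mixHom (A := Q) S g ≫ eqToHom eqYY.symm
                ≫ updHom (mixObj S Q Y) i (q i) ≫ eqToHom eqYQ) := by
        refine ⟨fun j =>
          if hji : j = i then
            eqToHom (by subst hji; rw [Function.update_self])
              ≫ s i ≫ eqToHom (by subst hji; exact (mixObj_not_mem hiS).symm)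
          else if hjS : j ∈ S then
            eqToHom (by rw [Function.update_of_ne hji,
              mixObj_mem (Finset.mem_insert_of_mem hjS), mixObj_mem hjS])
          else
            eqToHom (by rw [Function.update_of_ne hji,
              mixObj_not_mem (show j ∉ insert i S by simp [Finset.mem_insert, hji, hjS]),
              mixObj_not_mem hjS]), ?_, ?_⟩ <;>
        · funext j
          rcases eq_or_ne j i with rfl | hji
          · simp [mixHom, updHom, Pi.comp_apply, Functor.eqToHom_proj, hiS, hiT, hf', hg']
          · by_cases hjS : j ∈ S <;>
              simp [mixHom, updHom, Pi.comp_apply, Functor.eqToHom_proj, hji, hjS, hiT,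
                Finset.mem_insert, hf', hg', hq']
      have big_eq : F.map (updHom (mixObj (insert i S) Q X) i (q i))
            ≫ (F.map (eqToHom eqXQ) ≫ F.map (mixHom (A := Q) (insert i S) f) ≫ k₁)
          = F.map (updHom (mixObj (insert i S) Q X) i (q i))
            ≫ (F.map (eqToHom eqXQ) ≫ F.map (mixHom (A := Q) (insert i S) g) ≫ k₁) := by
        have t1 := congrArg F.map hcf
        have t2 := congrArg F.map hcg
        simp only [F.map_comp] at t1 t2
        calc F.map (updHom (mixObj (insert i S) Q X) i (q i))
              ≫ (F.map (eqToHom eqXQ) ≫ F.map (mixHom (A := Q) (insert i S) f) ≫ k₁)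
            = (F.map (updHom (mixObj (insert i S) Q X) i (q i))
              ≫ F.map (eqToHom eqXQ) ≫ F.map (mixHom (A := Q) (insert i S) f)) ≫ k₁ := by
              simp only [Category.assoc]
          _ = (F.map c ≫ F.map (mixHom (A := Q) S f) ≫ F.map (eqToHom eqYY.symm)
              ≫ F.map (updHom (mixObj S Q Y) i (q i)) ≫ F.map (eqToHom eqYQ)) ≫ k₁ := by
              rw [t1]
          _ = F.map c ≫ F.map (mixHom (A := Q) S f) ≫ k := by
              simp only [Category.assoc]; rw [hk₁]
          _ = F.map c ≫ F.map (mixHom (A := Q) S g) ≫ k := by rw [hk]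
          _ = (F.map c ≫ F.map (mixHom (A := Q) S g) ≫ F.map (eqToHom eqYY.symm)
              ≫ F.map (updHom (mixObj S Q Y) i (q i)) ≫ F.map (eqToHom eqYQ)) ≫ k₁ := by
              simp only [Category.assoc]; rw [hk₁]
          _ = (F.map (updHom (mixObj (insert i S) Q X) i (q i))
              ≫ F.map (eqToHom eqXQ) ≫ F.map (mixHom (A := Q) (insert i S) g)) ≫ k₁ := by
              rw [t2]
          _ = F.map (updHom (mixObj (insert i S) Q X) i (q i))
              ≫ (F.map (eqToHom eqXQ) ≫ F.map (mixHom (A := Q) (insert i S) g) ≫ k₁) := by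
              simp only [Category.assoc]
      have claim3 : F.map (mixHom (A := Q) (insert i S) f) ≫ k₁
          = F.map (mixHom (A := Q) (insert i S) g) ≫ k₁ :=
        (cancel_epi (F.map (eqToHom eqXQ))).mp (hc3.cancel big_eq)
      obtain ⟨d', hd', -⟩ := IH.2 Z k₁ claim3
      have hdd : F.map (mixHom (A := Q) S q) ≫ (F.map (eqToHom eqQQ.symm) ≫ d') = k := by
        rw [hqfact]
        simp only [F.map_comp, Category.assoc]
        rw [mec eqQQ eqQQ.symm d', hd', hk₁]
      refine ⟨F.map (eqToHom eqQQ.symm) ≫ d', hdd, fun d₂ hd₂ => ?_⟩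
      haveI h1 : Epi (F.map (updHom (mixObj S Q Y) i (q i))) := hc1.epi
      haveI h2 : Epi (F.map (mixHom (A := Q) (insert i S) q)) := IH.epi
      haveI hEpi : Epi (F.map (mixHom (A := Q) S q)) := by
        rw [hqfact]
        simp only [F.map_comp]
        infer_instance
      exact (cancel_epi (F.map (mixHom (A := Q) S q))).mp (hd₂.trans hdd.symm)

end Aux

/-- If a multivariable functor `F : Cⁿ ⥤ C` preserves reflexive coequalizers in each variable
separately (the other variables being fixed), then it preserves reflexive coequalizers of
`n`-tuples: for reflexive pairs `X i ⇉ Y i` with coequalizers `q i : Y i ⟶ Q i`, the canonical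
morphism from the coequalizer `E` of `F(X₁,…,Xₙ) ⇉ F(Y₁,…,Yₙ)` to `F(Q₁,…,Qₙ)` is an
isomorphism. -/
theorem stmt_9 {C : Type u} [Category.{v} C] [HasReflexiveCoequalizers C] {n : ℕ}
    (F : (Fin n → C) ⥤ C)
    (Hsep : ∀ (i : Fin n) (A : Fin n → C) (X Y : C) (f g : X ⟶ Y) (s : Y ⟶ X),
      s ≫ f = 𝟙 Y → s ≫ g = 𝟙 Y →
      ∀ (Q : C) (q : Y ⟶ Q), IsCoeq f g q →
        IsCoeq (F.map (updHom A i f)) (F.map (updHom A i g)) (F.map (updHom A i q)))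
    (X Y Q : Fin n → C) (f g : ∀ i, X i ⟶ Y i) (s : ∀ i, Y i ⟶ X i)
    (hf : ∀ i, s i ≫ f i = 𝟙 (Y i)) (hg : ∀ i, s i ≫ g i = 𝟙 (Y i))
    (q : ∀ i, Y i ⟶ Q i) (hq : ∀ i, IsCoeq (f i) (g i) (q i))
    (E : C) (e : F.obj Y ⟶ E)
    (he : IsCoeq (F.map (f : X ⟶ Y)) (F.map (g : X ⟶ Y)) e)
    (h : E ⟶ F.obj Q) (hh : e ≫ h = F.map (q : Y ⟶ Q)) :
    IsIso h := by
  classical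
  have eX : mixObj (∅ : Finset (Fin n)) Q X = X := by funext j; simp [mixObj]
  have eY : mixObj (∅ : Finset (Fin n)) Q Y = Y := by funext j; simp [mixObj]
  have eQ0 : mixObj (∅ : Finset (Fin n)) Q Q = Q := by funext j; simp [mixObj]
  have hmain := mainCoeq F Hsep X Y Q f g s hf hg q hq
    ((∅ : Finset (Fin n))ᶜ.card) ∅ rfl
  have tf : F.map (mixHom (A := Q) ∅ f)
      = eqToHom (congrArg F.obj eX) ≫ F.map (f : X ⟶ Y) ≫ eqToHom (congrArg F.obj eY).symm := by
    have hcomp : mixHom (A := Q) ∅ f = eqToHom eX ≫ (f : X ⟶ Y) ≫ eqToHom eY.symm := by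
      funext j; simp [mixHom, Pi.comp_apply, Functor.eqToHom_proj]
    rw [hcomp]; simp [eqToHom_map]
  have tg : F.map (mixHom (A := Q) ∅ g)
      = eqToHom (congrArg F.obj eX) ≫ F.map (g : X ⟶ Y) ≫ eqToHom (congrArg F.obj eY).symm := by
    have hcomp : mixHom (A := Q) ∅ g = eqToHom eX ≫ (g : X ⟶ Y) ≫ eqToHom eY.symm := by
      funext j; simp [mixHom, Pi.comp_apply, Functor.eqToHom_proj]
    rw [hcomp]; simp [eqToHom_map]
  have tq : F.map (mixHom (A := Q) ∅ q)
      = eqToHom (congrArg F.obj eY) ≫ F.map (q : Y ⟶ Q) ≫ eqToHom (congrArg F.obj eQ0).symm := by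
    have hcomp : mixHom (A := Q) ∅ q = eqToHom eY ≫ (q : Y ⟶ Q) ≫ eqToHom eQ0.symm := by
      funext j; simp [mixHom, Pi.comp_apply, Functor.eqToHom_proj]
    rw [hcomp]; simp [eqToHom_map]
  have hFq : IsCoeq (F.map (f : X ⟶ Y)) (F.map (g : X ⟶ Y)) (F.map (q : Y ⟶ Q)) :=
    IsCoeq.transport' (congrArg F.obj eX) (congrArg F.obj eY) (congrArg F.obj eQ0)
      tf tg tq hmain
  obtain ⟨d, hd, -⟩ := hFq.2 E e he.1
  have h1 : h ≫ d = 𝟙 E := he.cancel (by rw [← Category.assoc, hh, hd, Category.comp_id])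
  have h2 : d ≫ h = 𝟙 (F.obj Q) := hFq.cancel (by rw [← Category.assoc, hd, hh, Category.comp_id])
  exact ⟨d, h1, h2⟩
end
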